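/- arXiv:2011.06344 — 3 statements merged into one kernel-verified Lean document; each statement's English description precedes it below -/
import Mathlib

section
/- Let f(x) = 4 - (x+1)^2 and M_p = ∫_0^1 f(x)^p dx. Then limsup_{p→∞} |M_p|^{1/p} = 3, and in particular limsup_{p→∞} |M_p|^{1/p} < max{|s| : s ∈ S} = 4, where S = {f(z) : f'(z) = 0} ∪ {f(0), f(1)}. This disproves the Müger–Tuset conjecture. -/
open Filter Real intervalIntegral

theorem stmt_3 (f : ℂ → ℂ) (hf : ∀ z, f z = 4 - (z + 1)^2)
    (M : ℕ → ℂ) (hM : ∀ p : ℕ, M p = ∫ x in (0:ℝ)..1, (f x) ^ p)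
    (S : Set ℂ) (hS : S = {w | ∃ z : ℂ, deriv f z = 0 ∧ f z = w} ∪ {f 0, f 1}) :
    Filter.limsup (fun p : ℕ => ‖M p‖ ^ (1 / (p : ℝ))) Filter.atTop = 3 ∧
    IsGreatest ((fun z : ℂ => ‖z‖) '' S) 4 ∧
    Filter.limsup (fun p : ℕ => ‖M p‖ ^ (1 / (p : ℝ))) Filter.atTop < 4 := by
  set g : ℝ → ℝ := fun x => 4 - (x + 1)^2 with hg
  have hgc : Continuous g := by
    exact continuous_const.sub ((continuous_id.add continuous_const).pow 2)
  have hgnn : ∀ x ∈ Set.Icc (0:ℝ) 1, 0 ≤ g x := by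
    intro x hx; simp only [hg]; nlinarith [hx.1, hx.2]
  have habs : ∀ p : ℕ, ‖M p‖ = ∫ x in (0:ℝ)..1, g x ^ p := by
    intro p
    have h1 : (fun x : ℝ => (f (x:ℂ))^p) = fun x : ℝ => ((g x ^ p : ℝ) : ℂ) := by
      funext x; rw [hf]; norm_cast
    rw [hM, h1, intervalIntegral.integral_ofReal, Complex.norm_real, Real.norm_eq_abs, abs_of_nonneg]
    apply intervalIntegral.integral_nonneg (by norm_num)
    intro x hx
    exact pow_nonneg (hgnn x hx) p
  have hint : ∀ p : ℕ, IntervalIntegrable (fun x => g x ^ p) MeasureTheory.volume 0 1 :=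
    fun p => (hgc.pow p).intervalIntegrable 0 1
  have hub : ∀ p : ℕ, ∫ x in (0:ℝ)..1, g x ^ p ≤ 3 ^ p := by
    intro p
    calc ∫ x in (0:ℝ)..1, g x ^ p ≤ ∫ _x in (0:ℝ)..1, (3:ℝ) ^ p := by
          apply intervalIntegral.integral_mono_on (by norm_num) (hint p)
            (intervalIntegrable_const)
          intro x hx
          apply pow_le_pow_left₀ (hgnn x hx)
          simp only [hg]; nlinarith [hx.1, hx.2]
      _ = 3 ^ p := by simp
  have hlb : ∀ p : ℕ, 3 ^ p / ((p:ℝ) + 1) ≤ ∫ x in (0:ℝ)..1, g x ^ p := by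
    intro p
    have h2 : ∫ x in (0:ℝ)..1, (3 * (1 - x)) ^ p = 3 ^ p / ((p:ℝ) + 1) := by
      have h3 : (fun x : ℝ => (3 * (1 - x)) ^ p) = fun x : ℝ => (3:ℝ)^p * (1 - x) ^ p := by
        funext x; rw [mul_pow]
      rw [h3, intervalIntegral.integral_const_mul]
      have h4 : ∫ x in (0:ℝ)..1, (1 - x) ^ p = ∫ x in (0:ℝ)..1, x ^ p := by
        rw [intervalIntegral.integral_comp_sub_left (fun x => x ^ p) 1]
        norm_num
      rw [h4, integral_pow]
      ring
    rw [← h2]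
    apply intervalIntegral.integral_mono_on (by norm_num)
      ((by continuity : Continuous fun x : ℝ => (3 * (1 - x)) ^ p).intervalIntegrable 0 1)
      (hint p)
    intro x hx
    apply pow_le_pow_left₀ (by linarith [hx.1, hx.2])
    simp only [hg]; nlinarith [hx.1, hx.2]
  have T1 : Tendsto (fun p : ℕ => ((p:ℝ)) ^ (1 / (p:ℝ))) atTop (nhds 1) :=
    tendsto_rpow_div.comp tendsto_natCast_atTop_atTop
  have T2 : Tendsto (fun p : ℕ => (((p:ℝ)) ^ (1 / (p:ℝ)))^2) atTop (nhds 1) := by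
    have := T1.mul T1
    simpa [sq] using this
  have T : Tendsto (fun p : ℕ => ((p:ℝ) + 1) ^ (1 / (p:ℝ))) atTop (nhds 1) := by
    apply tendsto_of_tendsto_of_tendsto_of_le_of_le' tendsto_const_nhds T2
    · filter_upwards [eventually_ge_atTop 1] with p hp
      have : (1:ℝ) ≤ (p:ℝ) + 1 := by linarith [(Nat.cast_nonneg p : (0:ℝ) ≤ p)]
      exact Real.one_le_rpow this (by positivity)
    · filter_upwards [eventually_ge_atTop 2] with p hp
      have hp2 : (2:ℝ) ≤ (p:ℝ) := by exact_mod_cast hp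
      have hple : ((p:ℝ) + 1) ≤ (p:ℝ)^2 := by nlinarith
      calc ((p:ℝ) + 1) ^ (1 / (p:ℝ)) ≤ ((p:ℝ)^2) ^ (1 / (p:ℝ)) :=
            Real.rpow_le_rpow (by positivity) hple (by positivity)
        _ = (((p:ℝ)) ^ (1 / (p:ℝ)))^2 := by
            rw [← Real.rpow_natCast ((p:ℝ) ^ (1/(p:ℝ))) 2, ← Real.rpow_mul (by positivity),
              ← Real.rpow_natCast (p:ℝ) 2, ← Real.rpow_mul (by positivity)]
            norm_num; ring_nf
  have key : Tendsto (fun p : ℕ => ‖M p‖ ^ (1 / (p : ℝ))) atTop (nhds 3) := by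
    have TL : Tendsto (fun p : ℕ => 3 / ((p:ℝ) + 1) ^ (1 / (p:ℝ))) atTop (nhds 3) := by
      have := Tendsto.div (tendsto_const_nhds (x := (3:ℝ))) T one_ne_zero
      simpa [Pi.div_def] using this
    apply tendsto_of_tendsto_of_tendsto_of_le_of_le' TL tendsto_const_nhds
    · filter_upwards [eventually_ge_atTop 1] with p hp
      have hp0 : (0:ℝ) < (p:ℝ) := by exact_mod_cast Nat.lt_of_lt_of_le Nat.zero_lt_one hp
      have h5 : (3:ℝ) ^ p / ((p:ℝ) + 1) ≤ ‖M p‖ := by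
        rw [habs p]; exact hlb p
      have h6 : ((3:ℝ) ^ p / ((p:ℝ) + 1)) ^ (1 / (p:ℝ)) ≤ ‖M p‖ ^ (1 / (p:ℝ)) :=
        Real.rpow_le_rpow (by positivity) h5 (by positivity)
      refine le_trans (le_of_eq ?_) h6
      rw [Real.div_rpow (by positivity) (by positivity), ← Real.rpow_natCast (3:ℝ) p,
        ← Real.rpow_mul (by norm_num)]
      rw [mul_one_div, div_self (ne_of_gt hp0), Real.rpow_one]
    · filter_upwards [eventually_ge_atTop 1] with p hp
      have hp0 : (0:ℝ) < (p:ℝ) := by exact_mod_cast Nat.lt_of_lt_of_le Nat.zero_lt_one hp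
      have h5 : ‖M p‖ ≤ (3:ℝ) ^ p := by rw [habs p]; exact hub p
      have h6 : ‖M p‖ ^ (1/(p:ℝ)) ≤ ((3:ℝ) ^ p) ^ (1/(p:ℝ)) :=
        Real.rpow_le_rpow (by positivity) h5 (by positivity)
      refine h6.trans (le_of_eq ?_)
      rw [← Real.rpow_natCast (3:ℝ) p, ← Real.rpow_mul (by norm_num),
        mul_one_div, div_self (ne_of_gt hp0), Real.rpow_one]
  have hlimsup : Filter.limsup (fun p : ℕ => ‖M p‖ ^ (1 / (p : ℝ))) Filter.atTop = 3 :=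
    key.limsup_eq
  refine ⟨hlimsup, ?_, by rw [hlimsup]; norm_num⟩
  -- IsGreatest part
  have hd : ∀ z : ℂ, deriv f z = -(2 * (z + 1)) := by
    intro z
    have hfe : f = fun z : ℂ => 4 - (z + 1)^2 := funext hf
    have h : HasDerivAt (fun z : ℂ => 4 - (z + 1)^2) (-(2 * (z + 1))) z := by
      have h1 : HasDerivAt (fun z : ℂ => (z + 1)^2) (2 * (z + 1)) z := by
        have := ((hasDerivAt_id z).add_const 1).pow 2
        simpa [Pi.pow_def] using this
      simpa [Pi.sub_def] using (hasDerivAt_const z (4:ℂ)).sub h1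
    rw [hfe]; exact h.deriv
  constructor
  · rw [hS]
    exact ⟨f (-1), Or.inl ⟨-1, by rw [hd]; ring, rfl⟩, by rw [hf]; norm_num⟩
  · rintro y ⟨w, hw, rfl⟩
    rw [hS] at hw
    rcases hw with ⟨z, hz0, rfl⟩ | hw
    · have hz1 : z = -1 := by
        rw [hd] at hz0
        have : (2:ℂ) * (z + 1) = 0 := by linear_combination -hz0
        have h2 : z + 1 = 0 := by
          rcases mul_eq_zero.mp this with h | h
          · norm_num at h
          · exact h
        linear_combination h2
      rw [hz1, hf]; norm_num
    · rcases hw with rfl | rfl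
      · rw [hf]; norm_num
      · rw [hf]; norm_num
end

section
/- If f is a polynomial with real coefficients, not identically zero, and M_p = ∫_0^1 f(x)^p dx, then limsup_{p→∞} |M_p|^{1/p} = sup_{x∈[0,1]} |f(x)|. -/
open Filter MeasureTheory Set Polynomial Real Topology

theorem stmt_4 (f : Polynomial ℝ) (hf : f ≠ 0)
    (M : ℕ → ℝ) (hM : ∀ p : ℕ, M p = ∫ x in (0:ℝ)..1, (f.eval x) ^ p) :
    Filter.limsup (fun p : ℕ => |M p| ^ (1 / (p : ℝ))) Filter.atTop
      = sSup ((fun x : ℝ => |f.eval x|) '' Set.Icc 0 1) := by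
  have hgc : Continuous fun x : ℝ => |f.eval x| := f.continuous.abs
  obtain ⟨x0, hx0, hmax'⟩ := isCompact_Icc.exists_isMaxOn (Set.nonempty_Icc.2 zero_le_one)
    hgc.continuousOn
  set S := |f.eval x0| with hS
  have hmax : ∀ y ∈ Icc (0:ℝ) 1, |f.eval y| ≤ S := fun y hy => hmax' hy
  have hSsup : sSup ((fun x : ℝ => |f.eval x|) '' Icc 0 1) = S :=
    IsGreatest.csSup_eq ⟨⟨x0, hx0, rfl⟩, by rintro _ ⟨y, hy, rfl⟩; exact hmax y hy⟩
  have hSpos : 0 < S := by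
    rcases (abs_nonneg (f.eval x0)).lt_or_eq with h | h
    · exact h
    · exfalso
      apply hf
      apply Polynomial.eq_zero_of_infinite_isRoot
      apply (Set.Icc_infinite (zero_lt_one (α := ℝ))).mono
      intro x hx
      have h1 := hmax x hx
      have : |f.eval x| = 0 := le_antisymm (h1.trans h.symm.le) (abs_nonneg _)
      simpa [Polynomial.IsRoot] using abs_eq_zero.mp this
  -- integrability
  have hint : ∀ p : ℕ, IntervalIntegrable (fun x => (f.eval x) ^ p) volume 0 1 :=
    fun p => (f.continuous.pow p).intervalIntegrable 0 1
  -- values are nonneg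
  have hvnn : ∀ p : ℕ, 0 ≤ |M p| ^ (1 / (p : ℝ)) := fun p => Real.rpow_nonneg (abs_nonneg _) _
  -- upper bound
  have hub : ∀ p : ℕ, 1 ≤ p → |M p| ^ (1 / (p : ℝ)) ≤ S := by
    intro p hp
    have hMle : |M p| ≤ S ^ p := by
      rw [hM]
      calc |∫ x in (0:ℝ)..1, (f.eval x) ^ p|
          ≤ ∫ x in (0:ℝ)..1, |(f.eval x) ^ p| :=
            intervalIntegral.abs_integral_le_integral_abs zero_le_one
        _ ≤ ∫ x in (0:ℝ)..1, S ^ p := by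
            apply intervalIntegral.integral_mono_on zero_le_one ((hint p).abs)
              (intervalIntegrable_const)
            intro x hx
            rw [abs_pow]
            exact pow_le_pow_left₀ (abs_nonneg _) (hmax x hx) p
        _ = S ^ p := by simp
    calc |M p| ^ (1 / (p : ℝ)) ≤ (S ^ p) ^ (1 / (p : ℝ)) :=
          Real.rpow_le_rpow (abs_nonneg _) hMle (by positivity)
      _ = S := by
          rw [← Real.rpow_natCast S p, ← Real.rpow_mul hSpos.le,
            mul_one_div, div_self (by positivity), Real.rpow_one]
  -- lower bound: for every c < S, frequently c ≤ v p
  have hfreq : ∀ c < S, ∃ᶠ p : ℕ in atTop, c ≤ |M p| ^ (1 / (p : ℝ)) := by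
    intro c hc
    rcases le_or_gt c 0 with hc0 | hc0
    · exact Frequently.of_forall fun p => le_trans hc0 (hvnn p)
    set t := (c + S) / 2 with ht
    have htc : c < t := by simp only [ht]; linarith
    have htS : t < S := by simp only [ht]; linarith
    have htpos : 0 < t := lt_trans hc0 htc
    -- find a subinterval where |f| > t
    have hU : IsOpen {x : ℝ | t < |f.eval x|} := isOpen_lt continuous_const hgc
    obtain ⟨ε, hε, hball⟩ := Metric.isOpen_iff.mp hU x0 htS
    set a := max 0 (x0 - ε) with ha
    set b := min 1 (x0 + ε) with hb
    have h0a : (0:ℝ) ≤ a := le_max_left _ _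
    have hb1 : b ≤ 1 := min_le_left _ _
    have hab : a < b := by
      have h0 := hx0.1; have h1 := hx0.2
      simp only [ha, hb, max_lt_iff, lt_min_iff]
      exact ⟨⟨zero_lt_one, by linarith⟩, ⟨by linarith, by linarith⟩⟩
    have hsub : ∀ x ∈ Ioo a b, t < |f.eval x| := by
      intro x hx
      apply hball
      rw [Real.ball_eq_Ioo]
      constructor
      · exact lt_of_le_of_lt (le_max_right 0 (x0 - ε)) hx.1
      · exact lt_of_lt_of_le hx.2 (min_le_right 1 (x0 + ε))
    set δ := b - a with hδ
    have hδpos : 0 < δ := sub_pos.mpr hab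
    -- for even p, M p ≥ δ * t ^ p
    have hkey : ∀ p : ℕ, Even p → δ * t ^ p ≤ M p := by
      intro p hp
      rw [hM, intervalIntegral.integral_of_le zero_le_one]
      have hio : IntegrableOn (fun x => (f.eval x) ^ p) (Ioc (0:ℝ) 1) volume :=
        (f.continuous.pow p).integrableOn_Ioc
      calc δ * t ^ p = ∫ _ in Ioo a b, t ^ p := by
            rw [setIntegral_const, Real.volume_real_Ioo_of_le hab.le, smul_eq_mul]
        _ ≤ ∫ x in Ioo a b, (f.eval x) ^ p := by
            apply setIntegral_mono_on (integrableOn_const measure_Ioo_lt_top.ne)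
              (hio.mono_set (by intro x hx; exact ⟨lt_of_le_of_lt h0a hx.1, hx.2.le.trans hb1⟩))
              measurableSet_Ioo
            intro x hx
            rw [← hp.pow_abs (f.eval x)]
            exact pow_le_pow_left₀ htpos.le (hsub x hx).le p
        _ ≤ ∫ x in Ioc (0:ℝ) 1, (f.eval x) ^ p := by
            apply setIntegral_mono_set hio
            · exact Eventually.of_forall fun x => hp.pow_nonneg _
            · apply HasSubset.Subset.eventuallyLE
              intro x hx
              exact ⟨lt_of_le_of_lt h0a hx.1, hx.2.le.trans hb1⟩
    -- the auxiliary sequence tends to t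
    have htend : Tendsto (fun k : ℕ => δ ^ (1 / ((2 * k : ℕ) : ℝ)) * t) atTop (𝓝 t) := by
      have h1 : Tendsto (fun k : ℕ => 1 / ((2 * k : ℕ) : ℝ)) atTop (𝓝 0) := by
        apply tendsto_one_div_atTop_nhds_zero_nat.comp
        exact tendsto_atTop_atTop.mpr fun n => ⟨n, fun m hm => by omega⟩
      have h2 : Tendsto (fun k : ℕ => δ ^ (1 / ((2 * k : ℕ) : ℝ))) atTop (𝓝 1) := by
        have := (Real.continuousAt_const_rpow (a := δ) hδpos.ne').tendsto.comp h1
        simpa [Function.comp_def] using this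
      simpa using h2.mul_const t
    have hev : ∀ᶠ k : ℕ in atTop, c ≤ |M (2 * k)| ^ (1 / ((2 * k : ℕ) : ℝ)) := by
      filter_upwards [htend.eventually_const_lt htc, eventually_ge_atTop 1] with k hk hk1
      have heven : Even (2 * k) := even_two_mul k
      have hMnn : 0 ≤ M (2 * k) := by
        have := hkey (2 * k) heven
        nlinarith [pow_pos htpos (2 * k)]
      refine hk.le.trans ?_
      calc δ ^ (1 / ((2 * k : ℕ) : ℝ)) * t
          = (δ * t ^ (2 * k)) ^ (1 / ((2 * k : ℕ) : ℝ)) := by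
            rw [Real.mul_rpow hδpos.le (by positivity), ← Real.rpow_natCast t (2 * k),
              ← Real.rpow_mul htpos.le, mul_one_div, div_self (by positivity : ((2*k:ℕ):ℝ) ≠ 0),
              Real.rpow_one]
        _ ≤ |M (2 * k)| ^ (1 / ((2 * k : ℕ) : ℝ)) := by
            apply Real.rpow_le_rpow (by positivity) _ (by positivity)
            rw [abs_of_nonneg hMnn]
            exact hkey (2 * k) heven
    exact Tendsto.frequently (tendsto_atTop_atTop.mpr fun n => ⟨n, fun m hm => by omega⟩)
      hev.frequently
  -- combine
  rw [hSsup]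
  have hbdd : IsBoundedUnder (· ≤ ·) atTop (fun p : ℕ => |M p| ^ (1 / (p:ℝ))) := by
    refine ⟨max S 1, eventually_map.mpr <| Eventually.of_forall fun p => ?_⟩
    rcases Nat.eq_zero_or_pos p with h | h
    · simp only [h, Nat.cast_zero, div_zero, Real.rpow_zero]
      exact le_max_right _ _
    · exact (hub p h).trans (le_max_left _ _)
  have hcob : IsCoboundedUnder (· ≤ ·) atTop (fun p : ℕ => |M p| ^ (1 / (p:ℝ))) :=
    (Filter.isBoundedUnder_of ⟨0, fun p => hvnn p⟩ :
      IsBoundedUnder (· ≥ ·) atTop _).isCoboundedUnder_le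
  apply le_antisymm
  · exact Filter.limsup_le_of_le hcob
      (by filter_upwards [eventually_ge_atTop 1] with p hp using hub p hp)
  · exact le_of_forall_lt_imp_le_of_dense fun c hc =>
      Filter.le_limsup_of_frequently_le (hfreq c hc) hbdd
end

section
/- Let f(z) = 1 - (z + i/2)^2 and M_p = ∫_{-1}^1 f(x)^p dx. Then limsup_{p→∞} |M_p|^{1/p} < sup_{x∈[-1,1]} |f(x)|; specifically the limsup is at most √17/4 while the supremum equals 5/4. -/
open Complex Filter intervalIntegral

lemma sqrt17_ge_one : (1:ℝ) ≤ Real.sqrt 17 / 4 := by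
  rw [le_div_iff₀ (by norm_num), one_mul]
  nlinarith [Real.sq_sqrt (by norm_num : (0:ℝ) ≤ 17), Real.sqrt_nonneg 17]

lemma sqrt_17_16 : Real.sqrt (17/16) = Real.sqrt 17 / 4 := by
  rw [show (17/16 : ℝ) = 17 / 16 from rfl, Real.sqrt_div (by norm_num) 16,
    show (16:ℝ) = 4^2 by norm_num, Real.sqrt_sq (by norm_num : (0:ℝ) ≤ 4)]

lemma vert_bound (a : ℝ) (ha : a = 1 ∨ a = -1) (y : ℝ) (hy : y ∈ Set.Icc (-1/2 : ℝ) 0) :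
    ‖(1:ℂ) - ((a:ℂ) + (y:ℂ)*I + I/2)^2‖ ≤ Real.sqrt 17 / 4 := by
  have h1 : ((1:ℂ) - ((a:ℂ) + (y:ℂ)*I + I/2)^2)
      = (((1 - a^2 + (y+1/2)^2 : ℝ)) : ℂ) + ((-(2*a*(y+1/2)) : ℝ):ℂ) * I := by
    push_cast
    ring_nf
    rw [Complex.I_sq]
    ring
  rw [h1, Complex.norm_add_mul_I]
  have ha2 : a^2 = 1 := by rcases ha with h | h <;> subst h <;> norm_num
  rw [ha2]
  have hs0 : 0 ≤ y + 1/2 := by linarith [hy.1]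
  have hs1 : y + 1/2 ≤ 1/2 := by linarith [hy.2]
  rw [← sqrt_17_16]
  apply Real.sqrt_le_sqrt
  have h2 : (-(2*a*(y+1/2)))^2 = 4*(y+1/2)^2 := by
    have : (-(2*a*(y+1/2)))^2 = 4 * a^2 * (y+1/2)^2 := by ring
    rw [this, ha2]; ring
  rw [h2]
  have hsq : (y+1/2)^2 ≤ 1/4 := by nlinarith
  nlinarith [hsq, sq_nonneg (y+1/2), mul_self_nonneg ((y+1/2)^2)]

lemma key_bound (p : ℕ) :
    ‖∫ x in (-1:ℝ)..1, ((1:ℂ) - ((x:ℂ) + I/2)^2)^p‖ ≤ 3 * (Real.sqrt 17 / 4)^p := by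
  have hdecomp :
    (∫ x in (-1:ℝ)..1, ((1:ℂ) - ((x:ℂ) + I/2)^2)^p) =
      (∫ x in (-1:ℝ)..1, ((1:ℂ) - (((x:ℝ):ℂ) + ((-1/2:ℝ):ℂ)*I + I/2)^2)^p)
      + I • (∫ y in (-1/2:ℝ)..0, ((1:ℂ) - (((1:ℝ):ℂ) + (y:ℂ)*I + I/2)^2)^p)
      - I • (∫ y in (-1/2:ℝ)..0, ((1:ℂ) - (((-1:ℝ):ℂ) + (y:ℂ)*I + I/2)^2)^p) := by
    have H := Complex.integral_boundary_rect_eq_zero_of_differentiableOn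
      (fun z => ((1:ℂ) - (z + I/2)^2)^p) ⟨-1, -1/2⟩ ⟨1, 0⟩
      (((differentiable_const _).sub ((differentiable_id.add_const _).pow 2)).pow p).differentiableOn
    have h2 : ∀ x : ℝ, ((x:ℂ) + ((0:ℝ):ℂ)*I) = (x:ℂ) := by intro x; simp
    simp only [show ((⟨-1,-1/2⟩:ℂ)).re = -1 from rfl, show ((⟨-1,-1/2⟩:ℂ)).im = -1/2 from rfl,
      show ((⟨1,0⟩:ℂ)).re = 1 from rfl, show ((⟨1,0⟩:ℂ)).im = 0 from rfl, h2] at H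
    linear_combination -H
  have hc0 : (0:ℝ) ≤ Real.sqrt 17 / 4 := by positivity
  have hcp : (1:ℝ) ≤ (Real.sqrt 17 / 4)^p := one_le_pow₀ sqrt17_ge_one
  have hA : ‖∫ x in (-1:ℝ)..1, ((1:ℂ) - (((x:ℝ):ℂ) + ((-1/2:ℝ):ℂ)*I + I/2)^2)^p‖ ≤ 1 * |1 - (-1:ℝ)| := by
    apply intervalIntegral.norm_integral_le_of_norm_le_const
    intro x hx
    rw [Set.uIoc_of_le (by norm_num : (-1:ℝ) ≤ 1)] at hx
    have he : ((1:ℂ) - (((x:ℝ):ℂ) + ((-1/2:ℝ):ℂ)*I + I/2)^2) = (((1 - x^2 : ℝ)):ℂ) := by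
      push_cast; ring
    rw [he, norm_pow, Complex.norm_real, Real.norm_eq_abs]
    have h1 : |1 - x^2| ≤ 1 := by rw [abs_le]; constructor <;> nlinarith [hx.1, hx.2]
    calc |1 - x^2|^p ≤ 1^p := pow_le_pow_left₀ (abs_nonneg _) h1 p
      _ = 1 := one_pow p
  have hB : ∀ a : ℝ, a = 1 ∨ a = -1 →
      ‖∫ y in (-1/2:ℝ)..0, ((1:ℂ) - (((a:ℝ):ℂ) + (y:ℂ)*I + I/2)^2)^p‖
        ≤ (Real.sqrt 17 / 4)^p * |0 - (-1/2:ℝ)| := by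
    intro a ha
    apply intervalIntegral.norm_integral_le_of_norm_le_const
    intro y hy
    rw [Set.uIoc_of_le (by norm_num : (-1/2:ℝ) ≤ 0)] at hy
    rw [norm_pow]
    exact pow_le_pow_left₀ (norm_nonneg _) (vert_bound a ha y ⟨le_of_lt hy.1, hy.2⟩) p
  have h1 := hB 1 (Or.inl rfl)
  have hm1 := hB (-1) (Or.inr rfl)
  rw [hdecomp]
  set A := (∫ x in (-1:ℝ)..1, ((1:ℂ) - (((x:ℝ):ℂ) + ((-1/2:ℝ):ℂ)*I + I/2)^2)^p) with hAdef
  set B := (∫ y in (-1/2:ℝ)..0, ((1:ℂ) - (((1:ℝ):ℂ) + (y:ℂ)*I + I/2)^2)^p) with hBdef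
  set C := (∫ y in (-1/2:ℝ)..0, ((1:ℂ) - (((-1:ℝ):ℂ) + (y:ℂ)*I + I/2)^2)^p) with hCdef
  have hsm : ∀ z : ℂ, ‖I • z‖ = ‖z‖ := by
    intro z; rw [norm_smul, Complex.norm_I, one_mul]
  calc ‖A + I • B - I • C‖ ≤ ‖A + I • B‖ + ‖I • C‖ := norm_sub_le _ _
    _ ≤ ‖A‖ + ‖I • B‖ + ‖I • C‖ := by gcongr; exact norm_add_le _ _
    _ = ‖A‖ + ‖B‖ + ‖C‖ := by rw [hsm, hsm]
    _ ≤ 1 * |1 - (-1:ℝ)| + (Real.sqrt 17 / 4)^p * |0 - (-1/2:ℝ)|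
        + (Real.sqrt 17 / 4)^p * |0 - (-1/2:ℝ)| := by gcongr
    _ ≤ 3 * (Real.sqrt 17 / 4)^p := by
        rw [show |1 - (-1:ℝ)| = 2 by norm_num, show |0 - (-1/2:ℝ)| = 1/2 by norm_num]
        nlinarith

theorem stmt_9 (f : ℂ → ℂ) (hf : ∀ z, f z = 1 - (z + Complex.I / 2)^2)
    (M : ℕ → ℂ) (hM : ∀ p : ℕ, M p = ∫ x in (-1:ℝ)..1, (f x) ^ p) :
    Filter.limsup (fun p : ℕ => ‖M p‖ ^ (1 / (p : ℝ))) Filter.atTop ≤ Real.sqrt 17 / 4 ∧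
    sSup ((fun x : ℝ => ‖f x‖) '' Set.Icc (-1 : ℝ) 1) = 5 / 4 ∧
    Filter.limsup (fun p : ℕ => ‖M p‖ ^ (1 / (p : ℝ))) Filter.atTop
      < sSup ((fun x : ℝ => ‖f x‖) '' Set.Icc (-1 : ℝ) 1) := by
  have hc1 : (1:ℝ) ≤ Real.sqrt 17 / 4 := sqrt17_ge_one
  have hc0 : (0:ℝ) < Real.sqrt 17 / 4 := lt_of_lt_of_le one_pos hc1
  have habs : ∀ p : ℕ, ‖M p‖ ≤ 3 * (Real.sqrt 17 / 4) ^ p := by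
    intro p
    rw [hM p]
    simp only [hf]
    exact key_bound p
  have hev : ∀ᶠ p : ℕ in Filter.atTop,
      ‖M p‖ ^ (1/(p:ℝ)) ≤ (3:ℝ)^(1/(p:ℝ)) * (Real.sqrt 17 / 4) := by
    filter_upwards [Filter.eventually_ge_atTop 1] with p hp
    have hp0 : (p:ℝ) ≠ 0 := by
      simp only [ne_eq, Nat.cast_eq_zero]; omega
    have h1 : ‖M p‖ ^ (1/(p:ℝ)) ≤ ((3 * (Real.sqrt 17 / 4)^p : ℝ)) ^ (1/(p:ℝ)) :=
      Real.rpow_le_rpow (norm_nonneg _) (habs p) (by positivity)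
    have h2 : ((3 * (Real.sqrt 17 / 4)^p : ℝ)) ^ (1/(p:ℝ))
        = (3:ℝ)^(1/(p:ℝ)) * (Real.sqrt 17 / 4) := by
      rw [Real.mul_rpow (by norm_num) (by positivity),
        ← Real.rpow_natCast (Real.sqrt 17 / 4) p, ← Real.rpow_mul hc0.le,
        mul_one_div, div_self hp0, Real.rpow_one]
    exact h1.trans_eq h2
  have htend : Filter.Tendsto (fun p : ℕ => (3:ℝ)^(1/(p:ℝ)) * (Real.sqrt 17 / 4))
      Filter.atTop (nhds (Real.sqrt 17 / 4)) := by
    have h3 : Filter.Tendsto (fun p : ℕ => (3:ℝ)^(1/(p:ℝ))) Filter.atTop (nhds 1) := by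
      have hcont : ContinuousAt (fun x : ℝ => (3:ℝ) ^ x) 0 :=
        Real.continuousAt_const_rpow (by norm_num)
      have := hcont.tendsto.comp tendsto_one_div_atTop_nhds_zero_nat
      simpa [Real.rpow_zero, Function.comp_def] using this
    simpa using h3.mul_const (Real.sqrt 17 / 4)
  have hlimsup : Filter.limsup (fun p : ℕ => ‖M p‖ ^ (1/(p:ℝ)))
      Filter.atTop ≤ Real.sqrt 17 / 4 := by
    calc Filter.limsup (fun p : ℕ => ‖M p‖ ^ (1/(p:ℝ))) Filter.atTop
        ≤ Filter.limsup (fun p : ℕ => (3:ℝ)^(1/(p:ℝ)) * (Real.sqrt 17 / 4)) Filter.atTop :=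
          Filter.limsup_le_limsup hev
            (Filter.isCoboundedUnder_le_of_le Filter.atTop
              (fun p => Real.rpow_nonneg (norm_nonneg _) _))
            htend.isBoundedUnder_le
      _ = Real.sqrt 17 / 4 := htend.limsup_eq
  have hsup : IsGreatest ((fun x : ℝ => ‖f x‖) '' Set.Icc (-1 : ℝ) 1) (5/4) := by
    constructor
    · refine ⟨0, by norm_num, ?_⟩
      have he : f ((0:ℝ):ℂ) = (((5/4 : ℝ)):ℂ) := by
        rw [hf]
        push_cast
        ring_nf
        rw [Complex.I_sq]
        norm_num
      simp only [he, Complex.norm_real, Real.norm_eq_abs]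
      norm_num
    · rintro y ⟨x, hx, rfl⟩
      have he : f ((x:ℝ):ℂ) = (((5/4 - x^2 : ℝ)):ℂ) + ((-x : ℝ):ℂ) * Complex.I := by
        rw [hf]
        push_cast
        ring_nf
        rw [Complex.I_sq]
        ring
      simp only [he]
      rw [Complex.norm_add_mul_I]
      have hkey : (0:ℝ) ≤ x^2 * (3/2 - x^2) :=
        mul_nonneg (sq_nonneg x) (by nlinarith [hx.1, hx.2])
      have hle : (5/4 - x^2)^2 + (-x)^2 ≤ (5/4)^2 := by nlinarith
      calc Real.sqrt ((5/4 - x^2)^2 + (-x)^2) ≤ Real.sqrt ((5/4)^2) := Real.sqrt_le_sqrt hle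
        _ = 5/4 := Real.sqrt_sq (by norm_num)
  have hsSup := hsup.csSup_eq
  refine ⟨hlimsup, hsSup, ?_⟩
  rw [hsSup]
  refine lt_of_le_of_lt hlimsup ?_
  have h17 : Real.sqrt 17 < 5 := by
    nlinarith [Real.sq_sqrt (show (0:ℝ) ≤ 17 by norm_num), Real.sqrt_nonneg 17]
  linarith
end
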